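/- If a partial function f on Baire space is (continuously) Weihrauch reducible to LPO, then the level of f is at most 2, i.e. L_2(f) = ∅. -/

import Mathlib

abbrev Baire : Type := ℕ → ℕ

/-- Continuous Weihrauch reducibility between partial functions on Baire space,
given as a total function together with its domain. -/
def WLE (f : Baire → Baire) (domf : Set Baire)
    (g : Baire → Baire) (domg : Set Baire) : Prop :=
  ∃ (G : Baire → Baire) (F : Baire × Baire → Baire),
    ContinuousOn G domf ∧
    Set.MapsTo G domf domg ∧
    ContinuousOn F ((fun x => (x, g (G x))) '' domf) ∧
    ∀ x ∈ domf, f x = F (x, g (G x))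

open Classical in
/-- LPO(0^ℕ) = 0^ℕ and LPO(w) = 1,0,0,… for w ≠ 0^ℕ. -/
noncomputable def LPO : Baire → Baire := fun w =>
  if w = (fun _ => 0) then (fun _ => 0) else (fun k => if k = 0 then 1 else 0)

/-- The level sets of a partial function: L_0(f) = dom f and
L_{i+1}(f) = {x ∈ L_i(f) : f restricted to L_i(f) is not continuous at x}. -/
def lev {X Y : Type*} [TopologicalSpace X] [TopologicalSpace Y]
    (f : X → Y) (D : Set X) : ℕ → Set X
  | 0 => D
  | (i + 1) => {x ∈ lev f D i | ¬ ContinuousWithinAt f (lev f D i) x}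

theorem le_lpo_level_le_two (f : Baire → Baire) (domf : Set Baire)
    (h : WLE f domf LPO Set.univ) : lev f domf 2 = ∅ := by
  obtain ⟨G, F, hG, -, hF, hfx⟩ := h
  set zf : Baire := fun _ => 0 with hzf
  set e1 : Baire := fun k => if k = 0 then 1 else 0 with he1
  set S : Set (Baire × Baire) := (fun x => (x, LPO (G x))) '' domf with hS
  -- On points where G x ≠ 0, f is continuous within domf.
  have lemA : ∀ x ∈ domf, G x ≠ zf → ContinuousWithinAt f domf x := by
    intro x hx hne
    set U : Set Baire := domf ∩ G ⁻¹' {zf}ᶜ with hU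
    have hUnhds : U ∈ nhdsWithin x domf := by
      have := (hG x hx) (isOpen_compl_singleton.mem_nhds (by simpa using hne))
      exact Filter.inter_mem self_mem_nhdsWithin this
    have hcomp : ContinuousWithinAt (F ∘ fun y => (y, e1)) U x := by
      have hmem : (x, e1) ∈ S := by
        refine ⟨x, hx, ?_⟩
        simp +zetaDelta [LPO, hne]
      have hj : ContinuousWithinAt (fun y : Baire => (y, e1)) U x :=
        (continuous_id.prodMk continuous_const).continuousWithinAt
      have hmaps : Set.MapsTo (fun y : Baire => (y, e1)) U S := by
        intro y hy
        refine ⟨y, hy.1, ?_⟩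
        have : G y ≠ zf := hy.2
        simp +zetaDelta [LPO, this]
      exact ContinuousWithinAt.comp (hF (x, e1) hmem) hj hmaps
    have hcw : ContinuousWithinAt f U x := by
      refine hcomp.congr ?_ ?_
      · intro y hy
        have : G y ≠ zf := hy.2
        rw [hfx y hy.1]
        simp +zetaDelta [LPO, this]
      · rw [hfx x hx]
        simp +zetaDelta [LPO, hne]
    exact hcw.mono_of_mem_nhdsWithin hUnhds
  -- On the set Z where G x = 0, f is continuous within Z.
  set Z : Set Baire := {y ∈ domf | G y = zf} with hZ
  have lemB : ∀ x ∈ Z, ContinuousWithinAt f Z x := by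
    intro x hx
    have hmem : (x, zf) ∈ S := ⟨x, hx.1, by simp +zetaDelta [LPO, hx.2]⟩
    have hj : ContinuousWithinAt (fun y : Baire => (y, zf)) Z x :=
      (continuous_id.prodMk continuous_const).continuousWithinAt
    have hmaps : Set.MapsTo (fun y : Baire => (y, zf)) Z S := by
      intro y hy
      exact ⟨y, hy.1, by simp +zetaDelta [LPO, hy.2]⟩
    have hcomp : ContinuousWithinAt (F ∘ fun y => (y, zf)) Z x :=
      ContinuousWithinAt.comp (hF (x, zf) hmem) hj hmaps
    refine hcomp.congr ?_ ?_
    · intro y hy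
      rw [hfx y hy.1]
      simp +zetaDelta [LPO, hy.2]
    · rw [hfx x hx.1]
      simp +zetaDelta [LPO, hx.2]
  -- lev 1 ⊆ Z
  have hlev1 : lev f domf 1 ⊆ Z := by
    intro y hy
    refine ⟨hy.1, ?_⟩
    by_contra hne
    exact hy.2 (lemA y hy.1 hne)
  ext x
  simp only [Set.mem_empty_iff_false, iff_false]
  intro hx
  have hx1 : x ∈ lev f domf 1 := hx.1
  exact hx.2 ((lemB x (hlev1 hx1)).mono hlev1)
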